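/- Let K be a field, and let σ ∈ PGL₂(K) be an element of finite order n such that the characteristic of K does not divide n. Then ζₙ + ζₙ^{-1} ∈ K, where ζₙ is a primitive n-th root of unity in an algebraic closure of K. -/

import Mathlib

open Matrix Polynomial

/-- Chebyshev/Dickson-style induction: if `x + x⁻¹` lies in a subring, so does
`x ^ k + (x ^ k)⁻¹` for every `k`. -/
lemma PGL2_aux_dickson_mem {L : Type*} [Field L] (R : Subring L) (x : L)
    (h1 : x + x⁻¹ ∈ R) : ∀ k : ℕ, x ^ k + (x ^ k)⁻¹ ∈ R := by
  rcases eq_or_ne x 0 with rfl | hx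
  · intro k
    rcases Nat.eq_zero_or_pos k with rfl | hk
    · simpa using R.add_mem R.one_mem R.one_mem
    · simpa [zero_pow hk.ne'] using R.zero_mem
  have key : ∀ k : ℕ, (x ^ k + (x ^ k)⁻¹ ∈ R) ∧ (x ^ (k+1) + (x ^ (k+1))⁻¹ ∈ R) := by
    intro k
    induction k with
    | zero => exact ⟨by simpa using R.add_mem R.one_mem R.one_mem, by simpa using h1⟩
    | succ k ih =>
      refine ⟨ih.2, ?_⟩
      have hkey : x ^ (k+2) + (x ^ (k+2))⁻¹ =
          (x + x⁻¹) * (x ^ (k+1) + (x ^ (k+1))⁻¹) - (x ^ k + (x ^ k)⁻¹) := by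
        field_simp
        ring
      rw [hkey]
      exact R.sub_mem (R.mul_mem h1 ih.2) ih.1
  exact fun k => (key k).1

/-- Cayley–Hamilton for `2 × 2` matrices, by direct computation. -/
lemma PGL2_aux_CH {L : Type*} [CommRing L] (M : Matrix (Fin 2) (Fin 2) L) :
    M * M = M.trace • M - M.det • (1 : Matrix (Fin 2) (Fin 2) L) := by
  ext i j
  fin_cases i <;> fin_cases j <;>
    simp [Matrix.mul_apply, Fin.sum_univ_two, Matrix.trace_fin_two, Matrix.det_fin_two,
      Matrix.one_apply] <;> ring

/-- A scalar matrix gives a central element of `GL₂`. -/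
lemma PGL2_aux_scalar_mem_center {K : Type*} [Field K] (M : GL (Fin 2) K) (a : K)
    (h : (M : Matrix (Fin 2) (Fin 2) K) = a • 1) : M ∈ Subgroup.center (GL (Fin 2) K) := by
  rw [Subgroup.mem_center_iff]
  intro g
  ext : 1
  show (g : Matrix (Fin 2) (Fin 2) K) * M = (M : Matrix (Fin 2) (Fin 2) K) * g
  rw [h]
  simp [Matrix.mul_smul, Matrix.smul_mul]

/-- Central elements of `GL₂` are scalar matrices. -/
lemma PGL2_aux_center_is_scalar {K : Type*} [Field K] (M : GL (Fin 2) K)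
    (h : M ∈ Subgroup.center (GL (Fin 2) K)) :
    ∃ a : K, (M : Matrix (Fin 2) (Fin 2) K) = a • 1 := by
  rw [Subgroup.mem_center_iff] at h
  set Mm : Matrix (Fin 2) (Fin 2) K := (M : Matrix (Fin 2) (Fin 2) K) with hMm
  have hu : ∀ u : GL (Fin 2) K, (u : Matrix (Fin 2) (Fin 2) K) * Mm = Mm * u := by
    intro u
    have := congrArg Units.val (h u)
    simpa using this
  let u : GL (Fin 2) K := ⟨!![1,1;0,1], !![1,-1;0,1],
    by ext i j; fin_cases i <;> fin_cases j <;> simp [Matrix.mul_apply, Fin.sum_univ_two],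
    by ext i j; fin_cases i <;> fin_cases j <;> simp [Matrix.mul_apply, Fin.sum_univ_two]⟩
  let v : GL (Fin 2) K := ⟨!![1,0;1,1], !![1,0;-1,1],
    by ext i j; fin_cases i <;> fin_cases j <;> simp [Matrix.mul_apply, Fin.sum_univ_two],
    by ext i j; fin_cases i <;> fin_cases j <;> simp [Matrix.mul_apply, Fin.sum_univ_two]⟩
  have hu1 := hu u
  have hv1 := hu v
  rw [← Matrix.ext_iff] at hu1 hv1
  have e1 := hu1 0 0
  have e2 := hu1 0 1
  have e3 := hv1 1 1
  simp [u, v, Matrix.mul_apply, Fin.sum_univ_two] at e1 e2 e3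
  refine ⟨Mm 0 0, ?_⟩
  ext i j
  fin_cases i <;> fin_cases j <;> simp [Matrix.one_apply] <;>
    first | exact e3 | exact e1 | linear_combination e2

/-- Lagrange interpolation for powers of a `2 × 2` matrix with "eigenvalues"
`lam`, `mu`. -/
lemma PGL2_aux_interp {L : Type*} [Field L] (B : Matrix (Fin 2) (Fin 2) L) (lam mu : L)
    (hCH : B * B = (lam + mu) • B - (lam * mu) • (1 : Matrix (Fin 2) (Fin 2) L)) :
    ∀ m : ℕ, (lam - mu) • B ^ m
      = (lam ^ m - mu ^ m) • B
        + (lam * mu ^ m - mu * lam ^ m) • (1 : Matrix (Fin 2) (Fin 2) L) := by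
  intro m
  induction m with
  | zero => simp
  | succ m ih =>
    have h1 : (lam - mu) • B ^ (m+1) = ((lam - mu) • B ^ m) * B := by
      rw [pow_succ, Matrix.smul_mul]
    rw [h1, ih, add_mul, Matrix.smul_mul, Matrix.smul_mul, one_mul, hCH]
    match_scalars <;> ring

/-- Powers of `lam • 1 + N` with `N` square-zero. -/
lemma PGL2_aux_nilp {L : Type*} [Field L] (B : Matrix (Fin 2) (Fin 2) L) (lam : L)
    (N : Matrix (Fin 2) (Fin 2) L) (hN : N = B - lam • 1) (hN2 : N * N = 0) :
    ∀ m : ℕ, B ^ (m+1)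
      = lam ^ (m+1) • (1 : Matrix (Fin 2) (Fin 2) L) + (((m:L)+1) * lam ^ m) • N := by
  have hB : B = lam • 1 + N := by rw [hN]; abel
  intro m
  induction m with
  | zero => simpa using hB
  | succ m ih =>
    have h1 : B ^ (m+2) = B ^ (m+1) * B := by rw [pow_succ]
    rw [h1, ih, hB]
    simp only [add_mul, mul_add, Matrix.smul_mul, Matrix.mul_smul, one_mul, mul_one, hN2,
      smul_zero, add_zero]
    push_cast
    match_scalars <;> ring

/-- `PGL₂(K) = GL₂(K)/K^×`: over a field, the scalar matrices are exactly the
center of `GL₂(K)`. -/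
abbrev PGL2 (K : Type*) [Field K] : Type _ :=
  GL (Fin 2) K ⧸ Subgroup.center (GL (Fin 2) K)

set_option maxHeartbeats 1600000 in
/-- If `σ ∈ PGL₂(K)` has finite order `n` with `char K ∤ n`, then
`ζₙ + ζₙ⁻¹ ∈ K`, where `ζₙ` is a primitive `n`-th root of unity in an
algebraic closure of `K`. -/
theorem zeta_add_zeta_inv_mem_of_order_in_PGL2 {K : Type*} [Field K]
    (σ : PGL2 K) (n : ℕ) (hn : 0 < n) (hord : orderOf σ = n)
    (hchar : ¬ (ringChar K ∣ n))
    (ζ : AlgebraicClosure K) (hζ : IsPrimitiveRoot ζ n) :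
    ζ + ζ⁻¹ ∈ (algebraMap K (AlgebraicClosure K)).range := by
  classical
  by_cases hn1 : n = 1
  · subst hn1
    have hζ1 : ζ = 1 := IsPrimitiveRoot.one_right_iff.mp hζ
    refine ⟨2, ?_⟩
    rw [hζ1, inv_one, map_ofNat]
    norm_num
  -- notation
  set L := AlgebraicClosure K with hLdef
  let f : K →+* L := algebraMap K L
  have hfinj : Function.Injective f := f.injective
  obtain ⟨A, rfl⟩ := QuotientGroup.mk_surjective σ
  set Am : Matrix (Fin 2) (Fin 2) K := (A : Matrix (Fin 2) (Fin 2) K) with hAm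
  set B : Matrix (Fin 2) (Fin 2) L := Am.map f with hB
  -- powers of the class of A are trivial iff the power of A is scalar
  have hmk : ∀ m : ℕ, (QuotientGroup.mk (A ^ m) :
      GL (Fin 2) K ⧸ Subgroup.center (GL (Fin 2) K)) = (QuotientGroup.mk A) ^ m :=
    fun m => map_pow (QuotientGroup.mk' _) A m
  have hpow_iff : ∀ m : ℕ, ((QuotientGroup.mk A :
      GL (Fin 2) K ⧸ Subgroup.center (GL (Fin 2) K)) ^ m = 1) ↔ ∃ a : K, Am ^ m = a • 1 := by
    intro m
    rw [← hmk, QuotientGroup.eq_one_iff]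
    constructor
    · intro h
      obtain ⟨a, ha⟩ := PGL2_aux_center_is_scalar _ h
      exact ⟨a, by rw [← Units.val_pow_eq_pow_val]; exact ha⟩
    · rintro ⟨a, ha⟩
      exact PGL2_aux_scalar_mem_center _ a (by rw [Units.val_pow_eq_pow_val]; exact ha)
  -- map facts
  have hmap_pow : ∀ m : ℕ, (Am ^ m).map f = B ^ m := by
    intro m
    rw [hB]
    show f.mapMatrix (Am ^ m) = (f.mapMatrix Am) ^ m
    exact map_pow f.mapMatrix Am m
  have hmap_smul : ∀ a : K, ((a • 1 : Matrix (Fin 2) (Fin 2) K)).map f = f a • 1 := by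
    intro a
    ext i j
    by_cases hij : i = j <;>
      simp [Matrix.map_apply, Matrix.one_apply, hij]
  have hdesc : ∀ (M : Matrix (Fin 2) (Fin 2) K) (c : L), M.map f = c • 1 → ∃ a : K, M = a • 1 := by
    intro M c h
    rw [← Matrix.ext_iff] at h
    have h01 : M 0 1 = 0 := by
      have := h 0 1
      simp [Matrix.map_apply, Matrix.one_apply] at this
      exact hfinj (by simpa using this)
    have h10 : M 1 0 = 0 := by
      have := h 1 0
      simp [Matrix.map_apply, Matrix.one_apply] at this
      exact hfinj (by simpa using this)
    have h00 : M 1 1 = M 0 0 := by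
      have ha := h 0 0
      have hb := h 1 1
      simp [Matrix.map_apply, Matrix.one_apply] at ha hb
      exact hfinj (by rw [ha, hb])
    refine ⟨M 0 0, ?_⟩
    ext i j
    fin_cases i <;> fin_cases j <;> simp [Matrix.one_apply, h01, h10, h00]
  -- trace and determinant
  set t : K := Am.trace with ht
  set d : K := Am.det with hd
  have htL : B.trace = f t := by
    rw [hB, ht]
    simp [Matrix.trace_fin_two, Matrix.map_apply, map_add]
  have hdL : B.det = f d := by
    rw [hB, hd]
    simp [Matrix.det_fin_two, Matrix.map_apply]
  have hd0 : d ≠ 0 := by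
    rw [hd, hAm]
    exact ((Matrix.isUnit_iff_isUnit_det _).mp A.isUnit).ne_zero
  have hfd0 : f d ≠ 0 := fun h => hd0 (hfinj (by rw [h, map_zero]))
  -- eigenvalues
  have hdeg : (X ^ 2 - C (f t) * X + C (f d) : Polynomial L).degree = 2 := by
    compute_degree!
  obtain ⟨lam, hlam⟩ := IsAlgClosed.exists_root (X ^ 2 - C (f t) * X + C (f d) : Polynomial L)
    (by rw [hdeg]; exact (by norm_num))
  have hlam2 : lam * lam - f t * lam + f d = 0 := by
    have := hlam
    simp only [IsRoot, eval_add, eval_sub, eval_mul, eval_pow, eval_C, eval_X] at this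
    linear_combination this
  set mu : L := f t - lam with hmu
  have hsum : lam + mu = f t := by rw [hmu]; ring
  have hprod : lam * mu = f d := by rw [hmu]; linear_combination -hlam2
  have hlam0 : lam ≠ 0 := by
    intro h
    exact hfd0 (by rw [← hprod, h, zero_mul])
  have hmu0 : mu ≠ 0 := by
    intro h
    exact hfd0 (by rw [← hprod, h, mul_zero])
  have hCH : B * B = (lam + mu) • B - (lam * mu) • 1 := by
    rw [hsum, hprod, ← htL, ← hdL]
    exact PGL2_aux_CH B
  -- nontriviality
  have hσne : (QuotientGroup.mk A :
      GL (Fin 2) K ⧸ Subgroup.center (GL (Fin 2) K)) ≠ 1 := by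
    intro h
    rw [h, orderOf_one] at hord
    exact hn1 hord.symm
  have hAm_ns : ¬ ∃ a : K, Am = a • 1 := by
    rintro ⟨a, ha⟩
    exact hσne ((QuotientGroup.eq_one_iff A).mpr (PGL2_aux_scalar_mem_center A a ha))
  have hB_ns : ∀ c : L, B ≠ c • 1 := by
    intro c hc
    exact hAm_ns (hdesc Am c (by rw [← hB]; exact hc))
  -- characteristic
  have hnL : (n : L) ≠ 0 := by
    intro h
    haveI : CharP L (ringChar K) := charP_of_injective_algebraMap hfinj (ringChar K)
    exact hchar ((CharP.cast_eq_zero_iff L (ringChar K) n).mp h)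
  -- B ^ n is scalar
  have hBn : ∃ c : L, B ^ n = c • 1 := by
    have hσn : (QuotientGroup.mk A :
        GL (Fin 2) K ⧸ Subgroup.center (GL (Fin 2) K)) ^ n = 1 := by
      rw [← hord]; exact pow_orderOf_eq_one _
    obtain ⟨a, ha⟩ := (hpow_iff n).mp hσn
    exact ⟨f a, by rw [← hmap_pow, ha, hmap_smul]⟩
  -- lam ≠ mu
  have hlam_ne : lam ≠ mu := by
    intro heq
    have hCH' : B * B = (lam + lam) • B - (lam * lam) • 1 := by rw [hCH, ← heq]
    have hN2 : (B - lam • 1) * (B - lam • 1) = 0 := by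
      rw [sub_mul, mul_sub, mul_sub, hCH']
      simp only [Matrix.smul_mul, Matrix.mul_smul, one_mul, mul_one]
      match_scalars <;> ring
    obtain ⟨m, hm⟩ : ∃ m : ℕ, n = m + 1 := ⟨n - 1, (Nat.succ_pred_eq_of_pos hn).symm⟩
    have hstep := PGL2_aux_nilp B lam (B - lam • 1) rfl hN2 m
    rw [← hm] at hstep
    obtain ⟨c, hc⟩ := hBn
    have h2 : (((m:L)+1) * lam ^ m) • (B - lam • 1) = c • 1 - lam ^ n • 1 := by
      rw [← hc, hstep]; abel
    have hco : ((m:L)+1) * lam ^ m ≠ 0 := by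
      apply mul_ne_zero _ (pow_ne_zero _ hlam0)
      have : ((m:L)+1) = ((n:ℕ) : L) := by rw [hm]; push_cast; ring
      rw [this]; exact hnL
    have h3 : B - lam • 1 = ((((m:L)+1) * lam ^ m)⁻¹ * (c - lam ^ n)) • 1 := by
      have h2' := congrArg (fun Z => (((m:L)+1) * lam ^ m)⁻¹ • Z) h2
      simp only [smul_smul, smul_sub, inv_mul_cancel₀ hco, inv_mul_cancel_left₀ hco,
        one_smul] at h2'
      rw [h2']
      match_scalars
      ring
    have h4 : B = (lam + (((m:L)+1) * lam ^ m)⁻¹ * (c - lam ^ n)) • 1 := by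
      rw [add_smul]
      rw [eq_add_of_sub_eq h3]
      abel
    exact hB_ns _ h4
  have hlam_sub : lam - mu ≠ 0 := sub_ne_zero_of_ne hlam_ne
  have hinterp := PGL2_aux_interp B lam mu hCH
  -- scalar powers iff equal power of eigenvalues
  have hiff : ∀ m : ℕ, lam ^ m = mu ^ m ↔ ∃ c : L, B ^ m = c • 1 := by
    intro m
    constructor
    · intro he
      refine ⟨(lam - mu)⁻¹ * (lam * mu ^ m - mu * lam ^ m), ?_⟩
      have h5 := hinterp m
      rw [he, sub_self, zero_smul, zero_add] at h5
      have := congrArg (fun Z => (lam - mu)⁻¹ • Z) h5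
      simp only [smul_smul, inv_mul_cancel₀ hlam_sub, one_smul] at this
      rw [this, he]
    · rintro ⟨c, hc⟩
      by_contra hne
      have h5 := hinterp m
      rw [hc, smul_smul] at h5
      have hE : (lam ^ m - mu ^ m) • B
          = ((lam - mu) * c - (lam * mu ^ m - mu * lam ^ m)) • 1 := by
        rw [sub_smul ((lam - mu) * c), eq_sub_iff_add_eq, ← smul_smul]
        rw [smul_smul]
        exact h5.symm
      have hsub : lam ^ m - mu ^ m ≠ 0 := sub_ne_zero_of_ne hne
      have := congrArg (fun Z => (lam ^ m - mu ^ m)⁻¹ • Z) hE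
      simp only [smul_smul, inv_mul_cancel₀ hsub, one_smul] at this
      exact hB_ns _ this
  -- lam / mu is a primitive n-th root of unity
  have hzn : lam ^ n = mu ^ n := (hiff n).mpr hBn
  have hz0 : IsPrimitiveRoot (lam * mu⁻¹) n := by
    constructor
    · rw [mul_pow, inv_pow, hzn]
      exact mul_inv_cancel₀ (pow_ne_zero _ hmu0)
    · intro l hl
      rw [mul_pow, inv_pow, mul_inv_eq_one₀ (pow_ne_zero _ hmu0)] at hl
      obtain ⟨c, hcl⟩ := (hiff l).mp hl
      obtain ⟨a, hal⟩ := hdesc (Am ^ l) c (by rw [hmap_pow]; exact hcl)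
      have hσl := (hpow_iff l).mpr ⟨a, hal⟩
      rw [← hord]
      exact orderOf_dvd_of_pow_eq_one hσl
  haveI : NeZero n := ⟨hn.ne'⟩
  obtain ⟨i, _, hζeq⟩ := hz0.eq_pow_of_pow_eq_one hζ.pow_eq_one
  have hz0ne : lam * mu⁻¹ ≠ 0 := mul_ne_zero hlam0 (inv_ne_zero hmu0)
  -- the base case of the Dickson recursion lies in K
  have hs1 : lam * mu⁻¹ + (lam * mu⁻¹)⁻¹ ∈ (algebraMap K L).range := by
    refine ⟨(t * t - 2 * d) / d, ?_⟩
    have hformula : (f t * f t - 2 * f d) / f d = lam * mu⁻¹ + (lam * mu⁻¹)⁻¹ := by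
      rw [← hsum, ← hprod]
      clear_value mu
      rw [div_eq_iff (mul_ne_zero hlam0 hmu0), mul_inv, inv_inv]
      linear_combination (-(lam * lam)) * mul_inv_cancel₀ hmu0 - (mu * mu) * mul_inv_cancel₀ hlam0
    show f ((t * t - 2 * d) / d) = _
    rw [map_div₀, map_sub, _root_.map_mul, _root_.map_mul, map_ofNat]
    exact hformula
  have hmem := PGL2_aux_dickson_mem ((algebraMap K L).range) (lam * mu⁻¹) hs1 i
  rw [← hζeq]
  exact hmem
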